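/- For every real number p ≥ 2, every μ ∈ ℝ, and all vectors ξ, η in ℝ^m, ⟨(μ²+|ξ|²)^{(p-2)/2} ξ − (μ²+|η|²)^{(p-2)/2} η, ξ − η⟩ ≥ 2^{-p/2} (2μ² + |ξ|² + |η|²)^{(p-2)/2} |ξ − η|². -/

import Mathlib

theorem stmt_3 (m : ℕ) (p : ℝ) (hp : 2 ≤ p) (μ : ℝ)
    (ξ η : EuclideanSpace ℝ (Fin m)) :
    (inner ℝ (((μ ^ 2 + ‖ξ‖ ^ 2) ^ ((p - 2) / 2)) • ξ -
        ((μ ^ 2 + ‖η‖ ^ 2) ^ ((p - 2) / 2)) • η) (ξ - η) : ℝ) ≥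
      (2 : ℝ) ^ (-p / 2) * (2 * μ ^ 2 + ‖ξ‖ ^ 2 + ‖η‖ ^ 2) ^ ((p - 2) / 2) *
        ‖ξ - η‖ ^ 2 := by
  set q : ℝ := (p - 2) / 2 with hq
  have hq0 : 0 ≤ q := by rw [hq]; linarith
  set a : ℝ := (μ ^ 2 + ‖ξ‖ ^ 2) ^ q with haq
  set b : ℝ := (μ ^ 2 + ‖η‖ ^ 2) ^ q with hbq
  have ha : 0 ≤ a := Real.rpow_nonneg (by positivity) q
  have hb : 0 ≤ b := Real.rpow_nonneg (by positivity) q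
  have hS : (0:ℝ) ≤ 2 * μ ^ 2 + ‖ξ‖ ^ 2 + ‖η‖ ^ 2 := by positivity
  have pos2q : (0:ℝ) < (2:ℝ) ^ q := Real.rpow_pos_of_pos (by norm_num) q
  -- sign lemma
  have h1 : 0 ≤ (a - b) * (‖ξ‖ ^ 2 - ‖η‖ ^ 2) := by
    rcases le_total (‖ξ‖ ^ 2) (‖η‖ ^ 2) with h | h
    · have hab : a ≤ b := Real.rpow_le_rpow (by positivity) (by linarith) hq0
      nlinarith [mul_nonneg (show (0:ℝ) ≤ b - a by linarith)
        (show (0:ℝ) ≤ ‖η‖ ^ 2 - ‖ξ‖ ^ 2 by linarith)]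
    · have hab : b ≤ a := Real.rpow_le_rpow (by positivity) (by linarith) hq0
      exact mul_nonneg (by linarith) (by linarith)
  -- half bound
  have hhalf : (2:ℝ) ^ (-p / 2) * (2 * μ ^ 2 + ‖ξ‖ ^ 2 + ‖η‖ ^ 2) ^ q ≤ (a + b) / 2 := by
    have key : ((2 * μ ^ 2 + ‖ξ‖ ^ 2 + ‖η‖ ^ 2) / 2) ^ q ≤ a + b := by
      rcases le_total (‖ξ‖ ^ 2) (‖η‖ ^ 2) with h | h
      · have : ((2 * μ ^ 2 + ‖ξ‖ ^ 2 + ‖η‖ ^ 2) / 2) ^ q ≤ b :=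
          Real.rpow_le_rpow (by positivity) (by linarith) hq0
        linarith
      · have : ((2 * μ ^ 2 + ‖ξ‖ ^ 2 + ‖η‖ ^ 2) / 2) ^ q ≤ a :=
          Real.rpow_le_rpow (by positivity) (by linarith) hq0
        linarith
    have hdiv : ((2 * μ ^ 2 + ‖ξ‖ ^ 2 + ‖η‖ ^ 2) / 2) ^ q
        = (2 * μ ^ 2 + ‖ξ‖ ^ 2 + ‖η‖ ^ 2) ^ q / 2 ^ q :=
      Real.div_rpow hS (by norm_num) q
    have e : (2:ℝ) ^ (-p / 2) = ((2:ℝ) ^ q)⁻¹ * 2⁻¹ := by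
      rw [show -p / 2 = -q + (-1) by rw [hq]; ring, Real.rpow_add (by norm_num),
        Real.rpow_neg (by norm_num), Real.rpow_neg_one]
    rw [e]
    rw [hdiv, div_le_iff₀ pos2q] at key
    have step : ((2:ℝ) ^ q)⁻¹ * 2⁻¹ * (2 * μ ^ 2 + ‖ξ‖ ^ 2 + ‖η‖ ^ 2) ^ q
        ≤ ((2:ℝ) ^ q)⁻¹ * 2⁻¹ * ((a + b) * 2 ^ q) :=
      mul_le_mul_of_nonneg_left key (by positivity)
    have eq2 : ((2:ℝ) ^ q)⁻¹ * 2⁻¹ * ((a + b) * 2 ^ q) = (a + b) / 2 := by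
      field_simp
    linarith
  have expand : (inner ℝ (a • ξ - b • η) (ξ - η) : ℝ)
      = a * ‖ξ‖ ^ 2 - (a + b) * (inner ℝ ξ η : ℝ) + b * ‖η‖ ^ 2 := by
    simp only [inner_sub_left, inner_sub_right, real_inner_smul_left,
      real_inner_self_eq_norm_sq, real_inner_comm η ξ]
    ring
  have hns : ‖ξ - η‖ ^ 2 = ‖ξ‖ ^ 2 - 2 * (inner ℝ ξ η : ℝ) + ‖η‖ ^ 2 :=
    norm_sub_sq_real ξ η
  have h3 : 0 ≤ ‖ξ‖ ^ 2 - 2 * (inner ℝ ξ η : ℝ) + ‖η‖ ^ 2 := by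
    rw [← hns]; positivity
  rw [expand, hns, ge_iff_le]
  nlinarith [mul_nonneg (sub_nonneg.mpr hhalf) h3, h1]
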